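/- The product action of a direct product of transitive abelian permutation groups is pre-primitive. -/

import Mathlib

open Equiv

variable {Ω : Type*}

/-- `G` is a transitive permutation group on `Ω`. -/
def IsTransitive (G : Subgroup (Perm Ω)) : Prop :=
  ∀ x y : Ω, ∃ g ∈ G, g x = y

/-- The partition (setoid) `r` of `Ω` is `G`-invariant. -/
def IsInvariantPartition (G : Subgroup (Perm Ω)) (r : Setoid Ω) : Prop :=
  ∀ g ∈ G, ∀ x y : Ω, r.r x y → r.r (g x) (g y)

/-- The partition `r` of `Ω` is the orbit partition of the permutation group `H`. -/
def IsOrbitPartition (H : Subgroup (Perm Ω)) (r : Setoid Ω) : Prop :=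
  ∀ x y : Ω, r.r x y ↔ ∃ h ∈ H, h x = y

/-- `G` is pre-primitive: every `G`-invariant partition is the orbit partition
of a subgroup of `G`. -/
def IsPrePrimitive (G : Subgroup (Perm Ω)) : Prop :=
  ∀ r : Setoid Ω, IsInvariantPartition G r → ∃ H ≤ G, IsOrbitPartition H r

/-- `N` is a normal subgroup of the permutation group `G`. -/
def IsNormalIn (N G : Subgroup (Perm Ω)) : Prop :=
  N ≤ G ∧ ∀ g ∈ G, ∀ n ∈ N, g * n * g⁻¹ ∈ N


/-- The coordinatewise (product) action homomorphism. -/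
def prodPermHom (Γ Δ : Type*) : Perm Γ × Perm Δ →* Perm (Γ × Δ) where
  toFun p := Equiv.prodCongr p.1 p.2
  map_one' := by ext ⟨a, b⟩ <;> rfl
  map_mul' p q := by ext ⟨a, b⟩ <;> rfl

/-- The direct product `G × H` in its coordinatewise product action on `Γ × Δ`,
as a subgroup of `Perm (Γ × Δ)`. -/
def productAction {Γ Δ : Type*} (G : Subgroup (Perm Γ)) (H : Subgroup (Perm Δ)) :
    Subgroup (Perm (Γ × Δ)) :=
  (G.prod H).map (prodPermHom Γ Δ)


theorem product_of_transitive_abelian_preprimitive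
    {Γ Δ : Type*} [Fintype Γ] [Fintype Δ]
    (G : Subgroup (Perm Γ)) (H : Subgroup (Perm Δ))
    (hG : IsTransitive G) (hH : IsTransitive H)
    (hGab : ∀ g₁ ∈ G, ∀ g₂ ∈ G, g₁ * g₂ = g₂ * g₁)
    (hHab : ∀ h₁ ∈ H, ∀ h₂ ∈ H, h₁ * h₂ = h₂ * h₁) :
    IsPrePrimitive (productAction G H) := by
  intro r hr
  rcases isEmpty_or_nonempty (Γ × Δ) with hE | hNE
  · exact ⟨⊥, bot_le, fun x y => (hE.false x).elim⟩
  obtain ⟨x₀⟩ := hNE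
  set A := productAction G H with hAdef
  have htrans : ∀ x y : Γ × Δ, ∃ a ∈ A, a x = y := by
    rintro ⟨x1, x2⟩ ⟨y1, y2⟩
    obtain ⟨g, hg, hgx⟩ := hG x1 y1
    obtain ⟨h, hh, hhx⟩ := hH x2 y2
    refine ⟨prodPermHom Γ Δ (g, h), ⟨(g, h), ⟨hg, hh⟩, rfl⟩, ?_⟩
    simp [prodPermHom, hgx, hhx]
  have hcomm : ∀ a ∈ A, ∀ b ∈ A, a * b = b * a := by
    rintro _ ⟨⟨g1, h1⟩, ⟨hg1, hh1⟩, rfl⟩ _ ⟨⟨g2, h2⟩, ⟨hg2, hh2⟩, rfl⟩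
    rw [← map_mul, ← map_mul, Prod.mk_mul_mk, Prod.mk_mul_mk,
      hGab g1 hg1 g2 hg2, hHab h1 hh1 h2 hh2]
  refine ⟨{ carrier := {a | a ∈ A ∧ r.r x₀ (a x₀)}
            one_mem' := ⟨A.one_mem, by simpa using r.refl x₀⟩
            mul_mem' := by
              rintro a b ⟨haA, ha⟩ ⟨hbA, hb⟩
              refine ⟨A.mul_mem haA hbA, ?_⟩
              have h1 := hr a haA x₀ (b x₀) hb
              exact r.trans ha h1
            inv_mem' := by
              rintro a ⟨haA, ha⟩
              refine ⟨A.inv_mem haA, ?_⟩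
              have h1 := hr a⁻¹ (A.inv_mem haA) x₀ (a x₀) ha
              rw [show a⁻¹ (a x₀) = x₀ from a.symm_apply_apply x₀] at h1
              exact r.symm h1 }, fun a ha => ha.1, ?_⟩
  intro x y
  constructor
  · intro hxy
    obtain ⟨a, haA, hax⟩ := htrans x₀ x
    obtain ⟨b, hbA, hbx⟩ := htrans x y
    refine ⟨b, ⟨hbA, ?_⟩, hbx⟩
    have h1 : r.r (a x₀) (b (a x₀)) := by rw [hax, hbx]; exact hxy
    have h2 := hr a⁻¹ (A.inv_mem haA) _ _ h1
    rw [show a⁻¹ (a x₀) = x₀ from a.symm_apply_apply x₀] at h2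
    have h3 : a⁻¹ (b (a x₀)) = b x₀ := by
      have hc := hcomm a haA b hbA
      calc a⁻¹ (b (a x₀)) = (a⁻¹ * (b * a)) x₀ := rfl
        _ = (a⁻¹ * (a * b)) x₀ := by rw [← hc]
        _ = b x₀ := by rw [inv_mul_cancel_left]
    rwa [h3] at h2
  · rintro ⟨k, ⟨hkA, hk⟩, rfl⟩
    obtain ⟨a, haA, hax⟩ := htrans x₀ x
    have h1 := hr a haA x₀ (k x₀) hk
    have h2 : a (k x₀) = k x := by
      have hc := hcomm a haA k hkA
      calc a (k x₀) = (a * k) x₀ := rfl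
        _ = (k * a) x₀ := by rw [hc]
        _ = k x := by rw [Perm.mul_apply, hax]
    rwa [hax, h2] at h1
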